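/- Let Δ be a real number with Δ ≠ -1. There exist constants C > 0 and T₀ > e such that for every T ≥ T₀, every U with 0 < U ≤ T / Real.log T, and every α with T < α < T + U, one has |(1/(U · α^Δ)) · ∫_T^{T+U} t^Δ dt − 1| ≤ C / Real.log T. -/
import Mathlib

open Real intervalIntegral

/-- For `r ∈ [1/2, 2]` and any real exponent `s`, `r ^ s ≤ 2 ^ |s|`. -/
lemma rpow_le_two_rpow_abs {r s : ℝ} (h1 : 1/2 ≤ r) (h2 : r ≤ 2) : r ^ s ≤ (2:ℝ) ^ |s| := by
  rcases le_or_gt 0 s with hs | hs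
  · rw [abs_of_nonneg hs]
    exact Real.rpow_le_rpow (by linarith) h2 hs
  · rw [abs_of_neg hs]
    calc r ^ s ≤ (1/2 : ℝ) ^ s :=
          Real.rpow_le_rpow_of_nonpos (by norm_num) h1 hs.le
      _ = (2:ℝ) ^ (-s) := by
          rw [one_div, Real.inv_rpow (by norm_num : (0:ℝ) ≤ 2),
            Real.rpow_neg (by norm_num : (0:ℝ) ≤ 2)]

theorem power_mean_over_intermediate (Δ : ℝ) (hΔ : Δ ≠ -1) :
    ∃ C > 0, ∃ T₀ > Real.exp 1, ∀ T ≥ T₀, ∀ U : ℝ, 0 < U → U ≤ T / Real.log T →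
      ∀ α : ℝ, T < α → α < T + U →
        |(1 / (U * α ^ Δ)) * (∫ t in T..(T + U), t ^ Δ) - 1| ≤ C / Real.log T := by
  refine ⟨|Δ| * (2:ℝ) ^ |Δ - 1| + 1, by positivity, Real.exp 1 + 1, by linarith, ?_⟩
  intro T hT U hU hUle α hα1 hα2
  have he : (1:ℝ) < Real.exp 1 := by
    have := Real.exp_one_gt_d9; linarith
  have hT1 : Real.exp 1 < T := by linarith
  have hTpos : (0:ℝ) < T := by linarith
  have hlog : 1 < Real.log T := by
    rw [show (1:ℝ) = Real.log (Real.exp 1) by simp]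
    exact Real.log_lt_log (Real.exp_pos 1) hT1
  have hlogpos : 0 < Real.log T := by linarith
  have hUT : U ≤ T := le_trans hUle (by
    rw [div_le_iff₀ hlogpos]; nlinarith)
  have hαpos : 0 < α := lt_trans hTpos hα1
  have hαΔ : 0 < α ^ Δ := Real.rpow_pos_of_pos hαpos Δ
  -- Lipschitz bound on [T, T+U]
  set K : ℝ := |Δ| * (2:ℝ) ^ |Δ - 1| * α ^ Δ / T with hK
  have hKnn : 0 ≤ K := by positivity
  have hderiv : ∀ x ∈ Set.Icc T (T + U),
      HasDerivWithinAt (fun t : ℝ => t ^ Δ) (Δ * x ^ (Δ - 1)) (Set.Icc T (T + U)) x := by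
    intro x hx
    exact (Real.hasDerivAt_rpow_const (Or.inl (by nlinarith [hx.1]))).hasDerivWithinAt
  have hbound : ∀ x ∈ Set.Icc T (T + U), ‖Δ * x ^ (Δ - 1)‖ ≤ K := by
    intro x hx
    have hxpos : 0 < x := lt_of_lt_of_le hTpos hx.1
    have hxα : x / α ≤ 2 := by
      rw [div_le_iff₀ hαpos]
      have : x ≤ T + U := hx.2
      nlinarith
    have hxα' : 1/2 ≤ x / α := by
      rw [le_div_iff₀ hαpos]
      have : T ≤ x := hx.1
      nlinarith
    have key : x ^ (Δ - 1) ≤ (2:ℝ) ^ |Δ - 1| * α ^ (Δ - 1) := by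
      have : x ^ (Δ - 1) = (x / α) ^ (Δ - 1) * α ^ (Δ - 1) := by
        rw [Real.div_rpow hxpos.le hαpos.le, div_mul_cancel₀]
        exact (Real.rpow_pos_of_pos hαpos _).ne'
      rw [this]
      exact mul_le_mul_of_nonneg_right (rpow_le_two_rpow_abs hxα' hxα)
        (Real.rpow_pos_of_pos hαpos _).le
    have hαΔ1 : α ^ (Δ - 1) = α ^ Δ / α := by
      rw [Real.rpow_sub hαpos, Real.rpow_one]
    rw [norm_mul, Real.norm_eq_abs, Real.norm_eq_abs,
      abs_of_nonneg (Real.rpow_pos_of_pos hxpos _).le]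
    calc |Δ| * x ^ (Δ - 1) ≤ |Δ| * ((2:ℝ) ^ |Δ - 1| * α ^ (Δ - 1)) :=
          mul_le_mul_of_nonneg_left key (abs_nonneg Δ)
      _ = |Δ| * (2:ℝ) ^ |Δ - 1| * α ^ Δ / α := by rw [hαΔ1]; ring
      _ ≤ K := by
          rw [hK]
          apply div_le_div_of_nonneg_left _ hTpos hα1.le
          positivity
  have hlip : ∀ t ∈ Set.Icc T (T + U), |t ^ Δ - α ^ Δ| ≤ K * U := by
    intro t ht
    have hαmem : α ∈ Set.Icc T (T + U) := ⟨hα1.le, hα2.le⟩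
    have := (convex_Icc T (T + U)).norm_image_sub_le_of_norm_hasDerivWithin_le
      hderiv hbound hαmem ht
    rw [Real.norm_eq_abs] at this
    refine le_trans this ?_
    apply mul_le_mul_of_nonneg_left _ hKnn
    rw [Real.norm_eq_abs, abs_le]
    constructor <;> [linarith [ht.1, ht.2]; linarith [ht.1, ht.2]]
  -- rewrite the difference as an integral
  have hint : IntervalIntegrable (fun t : ℝ => t ^ Δ) MeasureTheory.volume T (T + U) := by
    apply intervalIntegral.intervalIntegrable_rpow (Or.inr ?_)
    rw [Set.uIcc_of_le (by linarith)]
    intro h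
    exact absurd h.1 (by linarith)
  have hconst : IntervalIntegrable (fun _ : ℝ => α ^ Δ) MeasureTheory.volume T (T + U) :=
    intervalIntegrable_const
  have hsplit : (∫ t in T..(T + U), t ^ Δ) - U * α ^ Δ
      = ∫ t in T..(T + U), (t ^ Δ - α ^ Δ) := by
    rw [intervalIntegral.integral_sub hint hconst, intervalIntegral.integral_const, smul_eq_mul]
    ring
  have hnorm : |(∫ t in T..(T + U), t ^ Δ) - U * α ^ Δ| ≤ K * U * U := by
    rw [hsplit]
    have := intervalIntegral.norm_integral_le_of_norm_le_const
      (C := K * U) (a := T) (b := T + U) (f := fun t => t ^ Δ - α ^ Δ)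
      (fun x hx => by
        rw [Set.uIoc_of_le (by linarith)] at hx
        exact hlip x ⟨hx.1.le, hx.2⟩)
    rw [Real.norm_eq_abs] at this
    refine le_trans this ?_
    rw [show T + U - T = U by ring, abs_of_pos hU]
  -- conclude
  have hrw : (1 / (U * α ^ Δ)) * (∫ t in T..(T + U), t ^ Δ) - 1
      = ((∫ t in T..(T + U), t ^ Δ) - U * α ^ Δ) / (U * α ^ Δ) := by
    field_simp
  rw [hrw, abs_div, abs_of_pos (by positivity : (0:ℝ) < U * α ^ Δ)]
  rw [div_le_div_iff₀ (by positivity) hlogpos]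
  calc |(∫ t in T..(T + U), t ^ Δ) - U * α ^ Δ| * Real.log T
      ≤ (K * U * U) * Real.log T :=
        mul_le_mul_of_nonneg_right hnorm hlogpos.le
    _ ≤ (|Δ| * (2:ℝ) ^ |Δ - 1| + 1) * (U * α ^ Δ) := by
        have hUlog : U * Real.log T ≤ T := by
          calc U * Real.log T ≤ T / Real.log T * Real.log T :=
                mul_le_mul_of_nonneg_right hUle hlogpos.le
            _ = T := by field_simp
        have h1 : K * U * U * Real.log T = (|Δ| * (2:ℝ) ^ |Δ - 1| * α ^ Δ) * U * (U * Real.log T) / T := by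
          rw [hK]; ring
        rw [h1]
        rw [div_le_iff₀ hTpos]
        have h2 : (|Δ| * (2:ℝ) ^ |Δ - 1| * α ^ Δ) * U * (U * Real.log T)
            ≤ (|Δ| * (2:ℝ) ^ |Δ - 1| * α ^ Δ) * U * T := by
          apply mul_le_mul_of_nonneg_left hUlog
          positivity
        calc (|Δ| * (2:ℝ) ^ |Δ - 1| * α ^ Δ) * U * (U * Real.log T)
            ≤ (|Δ| * (2:ℝ) ^ |Δ - 1| * α ^ Δ) * U * T := h2
          _ ≤ (|Δ| * (2:ℝ) ^ |Δ - 1| + 1) * (U * α ^ Δ) * T := by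
              apply mul_le_mul_of_nonneg_right _ hTpos.le
              have : (0:ℝ) ≤ U * α ^ Δ := by positivity
              nlinarith [abs_nonneg Δ, Real.rpow_pos_of_pos (by norm_num : (0:ℝ)<2) |Δ-1|]
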